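/- Let E and F be real normed vector spaces, let z₀ ∈ E, and let φ, ψ : E → F be Fréchet differentiable at z₀ with φ(z₀) = ψ(z₀). Suppose there exist c ≥ 0 and a neighborhood U of z₀ such that ‖φ(z) − ψ(z)‖ ≤ c · ‖ψ(z) − ψ(z₀)‖ for all z ∈ U. Then the Fréchet derivatives at z₀ satisfy ‖Dφ(z₀) v − Dψ(z₀) v‖ ≤ c · ‖Dψ(z₀) v‖ for every v ∈ E; in particular the operator norm satisfies ‖Dφ(z₀) − Dψ(z₀)‖ ≤ c · ‖Dψ(z₀)‖. -/
import Mathlib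


open Filter

/-- If `φ` and `ψ` agree at `z₀` and `‖φ z − ψ z‖ ≤ c ‖ψ z − ψ z₀‖` near `z₀`, then
their Fréchet derivatives at `z₀` satisfy `‖Dφ(z₀) v − Dψ(z₀) v‖ ≤ c ‖Dψ(z₀) v‖` for
all `v`, and in operator norm `‖Dφ(z₀) − Dψ(z₀)‖ ≤ c ‖Dψ(z₀)‖`. -/
theorem fderiv_difference_bound
    {E F : Type*} [NormedAddCommGroup E] [NormedSpace ℝ E]
    [NormedAddCommGroup F] [NormedSpace ℝ F]
    (z₀ : E) (φ ψ : E → F) (φ' ψ' : E →L[ℝ] F)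
    (hφ : HasFDerivAt φ φ' z₀) (hψ : HasFDerivAt ψ ψ' z₀)
    (heq : φ z₀ = ψ z₀)
    (c : ℝ) (hc : 0 ≤ c)
    (hbound : ∀ᶠ z in nhds z₀, ‖φ z - ψ z‖ ≤ c * ‖ψ z - ψ z₀‖) :
    (∀ v : E, ‖φ' v - ψ' v‖ ≤ c * ‖ψ' v‖) ∧ ‖φ' - ψ'‖ ≤ c * ‖ψ'‖ := by
  have key : ∀ v : E, ‖φ' v - ψ' v‖ ≤ c * ‖ψ' v‖ := by
    intro v
    set g : ℝ → F := fun t => φ (z₀ + t • v) - ψ (z₀ + t • v) with hgdef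
    set h : ℝ → F := fun t => ψ (z₀ + t • v) - ψ z₀ with hhdef
    have hg : HasDerivAt g (φ' v - ψ' v) 0 := by
      have := (hφ.sub hψ).hasLineDerivAt v
      simpa [HasLineDerivAt, hgdef] using this
    have hh : HasDerivAt h (ψ' v) 0 := by
      have := (hψ.sub (hasFDerivAt_const (ψ z₀) z₀)).hasLineDerivAt v
      simpa [HasLineDerivAt, hhdef] using this
    have hg0 : g 0 = 0 := by simp [hgdef, heq]
    have hh0 : h 0 = 0 := by simp [hhdef]
    have hgs : Tendsto (fun t => ‖slope g 0 t‖) (nhdsWithin 0 {(0:ℝ)}ᶜ)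
        (nhds ‖φ' v - ψ' v‖) := (hasDerivAt_iff_tendsto_slope.mp hg).norm
    have hhs : Tendsto (fun t => c * ‖slope h 0 t‖) (nhdsWithin 0 {(0:ℝ)}ᶜ)
        (nhds (c * ‖ψ' v‖)) := ((hasDerivAt_iff_tendsto_slope.mp hh).norm).const_mul c
    have hcont : Tendsto (fun t : ℝ => z₀ + t • v) (nhds 0) (nhds z₀) := by
      have : Continuous fun t : ℝ => z₀ + t • v := by continuity
      simpa using this.tendsto 0
    have hev : ∀ᶠ t in nhdsWithin (0:ℝ) {(0:ℝ)}ᶜ,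
        ‖slope g 0 t‖ ≤ c * ‖slope h 0 t‖ := by
      filter_upwards [nhdsWithin_le_nhds (hcont.eventually hbound)] with t ht
      have hs : slope g 0 t = t⁻¹ • g t := by simp [slope, hg0, vsub_eq_sub]
      have hs' : slope h 0 t = t⁻¹ • h t := by simp [slope, hh0, vsub_eq_sub]
      rw [hs, hs', norm_smul, norm_smul]
      calc ‖t⁻¹‖ * ‖g t‖ ≤ ‖t⁻¹‖ * (c * ‖h t‖) := by
            exact mul_le_mul_of_nonneg_left ht (norm_nonneg _)
        _ = c * (‖t⁻¹‖ * ‖h t‖) := by ring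
    exact le_of_tendsto_of_tendsto hgs hhs hev
  refine ⟨key, ?_⟩
  have h2 : ‖φ' - ψ'‖ ≤ c * ‖ψ'‖ := by
    apply ContinuousLinearMap.opNorm_le_bound _ (by positivity)
    intro v
    calc ‖(φ' - ψ') v‖ = ‖φ' v - ψ' v‖ := by simp
      _ ≤ c * ‖ψ' v‖ := key v
      _ ≤ c * (‖ψ'‖ * ‖v‖) := by
          exact mul_le_mul_of_nonneg_left (ψ'.le_opNorm v) hc
      _ = c * ‖ψ'‖ * ‖v‖ := by ring
  exact h2
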